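/- Let Γ be a Coxeter graph with Coxeter system (W,S), let G be a group of symmetries of Γ acting on W, and suppose all G-orbits of S are finite. Suppose that every positive root α ∈ Φ⁺ can be written as w(α_s) for some w ∈ W^G and s ∈ S. If s, t ∈ S, g ∈ G, and t = g(s) ≠ s, then m_{s,t} = 2. -/

import Mathlib

open Real

/-- A Coxeter matrix on the set `S`, with `0` representing the label `∞`. -/
structure CoxeterMat (S : Type*) where
  m : S → S → ℕ
  diagonal : ∀ s, m s s = 1
  symmetric : ∀ s t, m s t = m t s
  off_diagonal : ∀ s t, s ≠ t → m s t ≠ 1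

namespace CoxeterMat

variable {S : Type*} (M : CoxeterMat S)

/-- The coefficient `⟨α_s, α_t⟩ = -2 cos (π / m_{s,t})`, with value `-2` when `m_{s,t} = ∞`. -/
noncomputable def c (s t : S) : ℝ :=
  if M.m s t = 0 then -2 else -2 * Real.cos (Real.pi / (M.m s t : ℝ))

/-- The simple root `α_s` in `V = ⊕_{s ∈ S} ℝ α_s`. -/
noncomputable def sroot (s : S) : S →₀ ℝ := Finsupp.single s 1

/-- The canonical bilinear form of the Coxeter graph. -/
noncomputable def bform : (S →₀ ℝ) →ₗ[ℝ] (S →₀ ℝ) →ₗ[ℝ] ℝ :=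
  Finsupp.lift _ ℝ S fun s => Finsupp.lift ℝ ℝ S fun t => M.c s t

/-- The simple reflection `σ_s : x ↦ x - ⟨α_s, x⟩ α_s`. -/
noncomputable def sigma (s : S) : (S →₀ ℝ) →ₗ[ℝ] (S →₀ ℝ) :=
  LinearMap.id - (M.bform (sroot s)).smulRight (sroot s)

/-- The Coxeter group `W`, realized as the subgroup of linear automorphisms of `V`
generated by the simple reflections. -/
noncomputable def Wgrp : Subgroup ((S →₀ ℝ) ≃ₗ[ℝ] (S →₀ ℝ)) :=
  Subgroup.closure {w | ∃ s : S, (w : (S →₀ ℝ) →ₗ[ℝ] (S →₀ ℝ)) = M.sigma s}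

/-- The canonical root system `Φ = {w(α_s) | w ∈ W, s ∈ S}`. -/
def Phi : Set (S →₀ ℝ) := {b | ∃ w ∈ M.Wgrp, ∃ s : S, b = w (sroot s)}

/-- The set of positive roots. -/
def PhiPos : Set (S →₀ ℝ) := {b | b ∈ M.Phi ∧ ∀ s, 0 ≤ b s}

/-- The equivalence relation `≡` on `Φ` generated by `α ≡₁ β ⟺ ⟨α, β⟩ ∉ {0, 1, -1}`. -/
def equivR : (S →₀ ℝ) → (S →₀ ℝ) → Prop :=
  Relation.EqvGen (fun a b => a ∈ M.Phi ∧ b ∈ M.Phi ∧ M.bform a b ∉ ({0, 1, -1} : Set ℝ))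

/-- The underlying graph of the Coxeter graph: `s` and `t` are joined iff `m_{s,t} ≥ 3`
(including `m_{s,t} = ∞`). -/
def graph : SimpleGraph S where
  Adj s t := s ≠ t ∧ M.m s t ≠ 2
  symm := ⟨fun s t h => ⟨h.1.symm, by rw [M.symmetric]; exact h.2⟩⟩
  loopless := ⟨fun s h => h.1 rfl⟩

/-- The action of a permutation of `S` on `V`. -/
noncomputable def permV (g : Equiv.Perm S) : (S →₀ ℝ) ≃ₗ[ℝ] (S →₀ ℝ) :=
  Finsupp.domLCongr g

/-- The set of elements of `W` fixed by the group `G` of symmetries (acting by conjugation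
by the corresponding permutations of coordinates). -/
noncomputable def WfixG (G : Subgroup (Equiv.Perm S)) :
    Set ((S →₀ ℝ) ≃ₗ[ℝ] (S →₀ ℝ)) :=
  {w | w ∈ M.Wgrp ∧ ∀ g ∈ G, permV g * w = w * permV g}

/-- Construct a simply laced Coxeter matrix from an adjacency relation. -/
noncomputable def ofAdj (A : S → S → Prop) (hs : ∀ s t, A s t → A t s)
    (hi : ∀ s, ¬ A s s) : CoxeterMat S where
  m s t := open Classical in if s = t then 1 else if A s t then 3 else 2
  diagonal s := by simp
  symmetric s t := by
    classical
    by_cases h : s = t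
    · subst h; rfl
    · have h' : t ≠ s := Ne.symm h
      simp only [if_neg h, if_neg h']
      by_cases hA : A s t
      · rw [if_pos hA, if_pos (hs s t hA)]
      · rw [if_neg hA, if_neg (fun h2 => hA (hs t s h2))]
  off_diagonal s t h := by
    classical
    simp only [if_neg h]
    split <;> norm_num

/-- Isomorphism of Coxeter graphs. -/
def Iso {T : Type*} (M : CoxeterMat S) (N : CoxeterMat T) : Prop :=
  ∃ e : S ≃ T, ∀ s t, N.m (e s) (e t) = M.m s t

/-- The full Coxeter subgraph spanned by `Y ⊆ S`. -/
def restrict (Y : Set S) : CoxeterMat Y where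
  m s t := M.m s t
  diagonal s := M.diagonal s
  symmetric s t := M.symmetric s t
  off_diagonal s t h := M.off_diagonal s t (fun hh => h (Subtype.ext hh))

end CoxeterMat

open CoxeterMat

/-- The Coxeter graph `A_n`: a path with `n` vertices. -/
noncomputable def pathA (n : ℕ) : CoxeterMat (Fin n) :=
  ofAdj (fun i j => i.val + 1 = j.val ∨ j.val + 1 = i.val)
    (fun _ _ h => h.symm)
    (fun s h => by rcases h with h | h <;> omega)

/-- The Coxeter graph `D_n`: a path `0 — 1 — ⋯ — (n-2)` together with an extra vertex `n-1`
joined to `n-3`. -/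
noncomputable def Dmat (n : ℕ) : CoxeterMat (Fin n) :=
  ofAdj (fun i j => i ≠ j ∧
      (((i.val + 1 = j.val ∧ j.val ≤ n - 2) ∨ (i.val + 2 = j.val ∧ j.val = n - 1)) ∨
       ((j.val + 1 = i.val ∧ i.val ≤ n - 2) ∨ (j.val + 2 = i.val ∧ i.val = n - 1))))
    (fun _ _ h => ⟨h.1.symm, h.2.symm⟩)
    (fun s h => h.1 rfl)

/-- Adjacency relation determined by a list of edges. -/
def listAdj {n : ℕ} (L : List (Fin n × Fin n)) (i j : Fin n) : Prop :=
  (i, j) ∈ L ∨ (j, i) ∈ L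

instance {n : ℕ} (L : List (Fin n × Fin n)) (i j : Fin n) : Decidable (listAdj L i j) := by
  unfold listAdj; infer_instance

/-- The Coxeter graph `E₆`. -/
noncomputable def E6mat : CoxeterMat (Fin 6) :=
  ofAdj (listAdj [(0,2),(2,3),(3,4),(4,5),(1,3)])
    (fun _ _ h => h.symm) (by decide)

/-- The Coxeter graph `E₇`. -/
noncomputable def E7mat : CoxeterMat (Fin 7) :=
  ofAdj (listAdj [(0,2),(2,3),(3,4),(4,5),(5,6),(1,3)])
    (fun _ _ h => h.symm) (by decide)

/-- The Coxeter graph `E₈`. -/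
noncomputable def E8mat : CoxeterMat (Fin 8) :=
  ofAdj (listAdj [(0,2),(2,3),(3,4),(4,5),(5,6),(6,7),(1,3)])
    (fun _ _ h => h.symm) (by decide)

/-- The Coxeter graph `A_∞`: the one-sided infinite path. -/
noncomputable def Ainf : CoxeterMat ℕ :=
  ofAdj (fun i j => i + 1 = j ∨ j + 1 = i)
    (fun _ _ h => h.symm)
    (fun s h => by omega)

/-- The Coxeter graph `_∞A_∞`: the two-sided infinite path. -/
noncomputable def ZAinf : CoxeterMat ℤ :=
  ofAdj (fun i j => i + 1 = j ∨ j + 1 = i)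
    (fun _ _ h => h.symm)
    (fun s h => by omega)

/-- The Coxeter graph `D_∞`: vertices `0, 1, 2, 3, …` with `0` and `1` joined to `2` and a
path `2 — 3 — 4 — ⋯`. -/
noncomputable def Dinf : CoxeterMat ℕ :=
  ofAdj (fun i j => i ≠ j ∧
      (((i = 0 ∧ j = 2) ∨ (i = 1 ∧ j = 2) ∨ (i + 1 = j ∧ 2 ≤ i)) ∨
       ((j = 0 ∧ i = 2) ∨ (j = 1 ∧ i = 2) ∨ (j + 1 = i ∧ 2 ≤ j))))
    (fun _ _ h => ⟨h.1.symm, h.2.symm⟩)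
    (fun s h => h.1 rfl)

/-- The affine Coxeter graph `Ã_n`: a cycle with `n + 1` vertices. -/
noncomputable def affA (n : ℕ) : CoxeterMat (ZMod (n + 1)) :=
  ofAdj (fun i j => i ≠ j ∧ (i + 1 = j ∨ j + 1 = i))
    (fun _ _ h => ⟨h.1.symm, h.2.symm⟩)
    (fun s h => h.1 rfl)

/-- The affine Coxeter graph `D̃_n` (on `n + 1` vertices, Bourbaki numbering): `0` and `1`
joined to `2`, a path `2 — 3 — ⋯ — (n-1)`, and `n` joined to `n-2`. -/
noncomputable def affD (n : ℕ) : CoxeterMat (Fin (n + 1)) :=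
  ofAdj (fun i j => i ≠ j ∧
      (((i.val = 0 ∧ j.val = 2) ∨ (i.val = 1 ∧ j.val = 2) ∨
        (i.val + 1 = j.val ∧ 2 ≤ i.val ∧ i.val ≤ n - 2) ∨
        (i.val = n - 2 ∧ j.val = n)) ∨
       ((j.val = 0 ∧ i.val = 2) ∨ (j.val = 1 ∧ i.val = 2) ∨
        (j.val + 1 = i.val ∧ 2 ≤ j.val ∧ j.val ≤ n - 2) ∨
        (j.val = n - 2 ∧ i.val = n))))
    (fun _ _ h => ⟨h.1.symm, h.2.symm⟩)
    (fun s h => h.1 rfl)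

/-- The affine Coxeter graph `Ẽ₆` (Bourbaki numbering, affine vertex `0`). -/
noncomputable def affE6 : CoxeterMat (Fin 7) :=
  ofAdj (listAdj [(1,3),(3,4),(4,5),(5,6),(2,4),(0,2)])
    (fun _ _ h => h.symm) (by decide)

/-- The affine Coxeter graph `Ẽ₇` (Bourbaki numbering, affine vertex `0`). -/
noncomputable def affE7 : CoxeterMat (Fin 8) :=
  ofAdj (listAdj [(0,1),(1,3),(3,4),(4,5),(5,6),(6,7),(2,4)])
    (fun _ _ h => h.symm) (by decide)

/-- The affine Coxeter graph `Ẽ₈` (Bourbaki numbering, affine vertex `0`). -/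
noncomputable def affE8 : CoxeterMat (Fin 9) :=
  ofAdj (listAdj [(1,3),(3,4),(4,5),(5,6),(6,7),(7,8),(2,4),(0,8)])
    (fun _ _ h => h.symm) (by decide)

namespace CoxeterMat
variable {S : Type*} (M : CoxeterMat S)

lemma two_le_m {s t : S} (h : s ≠ t) (h0 : M.m s t ≠ 0) : 2 ≤ M.m s t := by
  have := M.off_diagonal s t h
  omega

lemma c_self (s : S) : M.c s s = 2 := by
  unfold c
  rw [M.diagonal s]
  norm_num

lemma c_symm (s t : S) : M.c s t = M.c t s := by unfold c; rw [M.symmetric]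

lemma c_nonpos {s t : S} (h : s ≠ t) : M.c s t ≤ 0 := by
  unfold c
  split_ifs with h0
  · norm_num
  · have h2 : (2:ℝ) ≤ (M.m s t : ℝ) := by exact_mod_cast M.two_le_m h h0
    have hc : 0 ≤ Real.cos (Real.pi / (M.m s t : ℝ)) := by
      apply Real.cos_nonneg_of_mem_Icc
      constructor
      · have : 0 ≤ Real.pi / (M.m s t : ℝ) := by positivity
        linarith [Real.pi_pos]
      · calc Real.pi / (M.m s t : ℝ) ≤ Real.pi / 2 :=
              div_le_div_of_nonneg_left Real.pi_pos.le (by norm_num) h2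
        _ ≤ Real.pi / 2 := le_refl _
    nlinarith

lemma bform_single (s t : S) : M.bform (sroot s) (sroot t) = M.c s t := by
  unfold bform sroot
  simp [Finsupp.lift_apply, Finsupp.sum_single_index]

lemma bform_single_left (s : S) (y : S →₀ ℝ) :
    M.bform (sroot s) y = y.sum fun t v => v * M.c s t := by
  unfold bform sroot
  simp [Finsupp.lift_apply, Finsupp.sum_single_index]

lemma bform_symm (x y : S →₀ ℝ) : M.bform x y = M.bform y x := by
  induction x using Finsupp.induction_linear with
  | zero => simp
  | add a b ha hb => simp [map_add, ha, hb]
  | single a r =>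
    induction y using Finsupp.induction_linear with
    | zero => simp
    | add a' b' ha' hb' => simp [map_add, ha', hb']
    | single b u =>
      unfold bform
      simp [Finsupp.lift_apply, Finsupp.sum_single_index]
      rw [M.c_symm]
      ring

end CoxeterMat

namespace CoxeterMat
variable {S : Type*} (M : CoxeterMat S)

lemma sigma_apply (s : S) (x : S →₀ ℝ) :
    M.sigma s x = x - (M.bform (sroot s) x) • sroot s := rfl

lemma sigma_sroot (s t : S) :
    M.sigma s (sroot t) = sroot t - (M.c s t) • sroot s := by
  rw [sigma_apply, M.bform_single]

lemma sigma_sroot_self (s : S) : M.sigma s (sroot s) = -sroot s := by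
  rw [sigma_sroot, M.c_self]
  module

lemma sigma_sigma (s : S) (x : S →₀ ℝ) : M.sigma s (M.sigma s x) = x := by
  rw [sigma_apply, sigma_apply]
  rw [map_sub, map_smul, M.bform_single, M.c_self]
  simp only [smul_eq_mul, sub_smul, mul_smul]
  abel_nf
  module

lemma bform_sigma (s : S) (x y : S →₀ ℝ) :
    M.bform (M.sigma s x) (M.sigma s y) = M.bform x y := by
  rw [sigma_apply, sigma_apply]
  simp only [map_sub, map_smul, LinearMap.sub_apply, LinearMap.smul_apply, smul_eq_mul]
  rw [M.bform_single, M.c_self, M.bform_symm x (sroot s), M.bform_single_left]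
  ring

/-- simple reflection as a linear equivalence -/
noncomputable def sigmaE (s : S) : (S →₀ ℝ) ≃ₗ[ℝ] (S →₀ ℝ) :=
  LinearEquiv.ofLinear (M.sigma s) (M.sigma s)
    (LinearMap.ext fun x => M.sigma_sigma s x) (LinearMap.ext fun x => M.sigma_sigma s x)

@[simp] lemma sigmaE_apply (s : S) (x : S →₀ ℝ) : M.sigmaE s x = M.sigma s x := rfl

lemma sigmaE_coe (s : S) : (M.sigmaE s : (S →₀ ℝ) →ₗ[ℝ] (S →₀ ℝ)) = M.sigma s := rfl

lemma sigmaE_mem (s : S) : M.sigmaE s ∈ M.Wgrp :=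
  Subgroup.subset_closure ⟨s, rfl⟩

lemma sigmaE_sq (s : S) : M.sigmaE s * M.sigmaE s = 1 :=
  LinearEquiv.ext fun x => M.sigma_sigma s x

lemma sigmaE_inv (s : S) : (M.sigmaE s)⁻¹ = M.sigmaE s := by
  rw [inv_eq_iff_mul_eq_one, M.sigmaE_sq]

/-- invariance of the bilinear form under W -/
lemma bform_w {w : (S →₀ ℝ) ≃ₗ[ℝ] (S →₀ ℝ)} (hw : w ∈ M.Wgrp) (x y : S →₀ ℝ) :
    M.bform (w x) (w y) = M.bform x y := by
  induction hw using Subgroup.closure_induction generalizing x y with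
  | mem u hu =>
      obtain ⟨s, hs⟩ := hu
      have h1 : u x = M.sigma s x := by rw [← hs]; rfl
      have h2 : u y = M.sigma s y := by rw [← hs]; rfl
      rw [h1, h2, M.bform_sigma]
  | one => simp
  | mul u v _ _ hu hv =>
      have : ∀ z : S →₀ ℝ, (u * v) z = u (v z) := fun _ => rfl
      rw [this, this, hu, hv]
  | inv u _ hu =>
      have h := hu (u⁻¹ x) (u⁻¹ y)
      have h2 : ∀ z : S →₀ ℝ, u (u⁻¹ z) = z := fun z => u.apply_symm_apply z
      rw [h2, h2] at h
      exact h.symm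

end CoxeterMat
namespace CoxeterMat
variable {S : Type*} (M : CoxeterMat S)

/-- product of a word of simple reflections -/
noncomputable def wp (l : List S) : (S →₀ ℝ) ≃ₗ[ℝ] (S →₀ ℝ) :=
  (l.map M.sigmaE).prod

@[simp] lemma wp_nil : M.wp ([] : List S) = 1 := rfl

@[simp] lemma wp_cons (s : S) (l : List S) : M.wp (s :: l) = M.sigmaE s * M.wp l := by
  unfold wp; rw [List.map_cons, List.prod_cons]

lemma wp_append (l l' : List S) : M.wp (l ++ l') = M.wp l * M.wp l' := by
  unfold wp; rw [List.map_append, List.prod_append]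

@[simp] lemma wp_singleton (s : S) : M.wp [s] = M.sigmaE s := by
  unfold wp
  rw [List.map_singleton, List.prod_singleton]

lemma wp_concat (l : List S) (s : S) : M.wp (l ++ [s]) = M.wp l * M.sigmaE s := by
  rw [wp_append, wp_singleton]

lemma wp_mem (l : List S) : M.wp l ∈ M.Wgrp := by
  induction l with
  | nil => exact Subgroup.one_mem _
  | cons s l ih => rw [wp_cons]; exact Subgroup.mul_mem _ (M.sigmaE_mem s) ih

lemma wp_inv (l : List S) : (M.wp l)⁻¹ = M.wp l.reverse := by
  induction l with
  | nil => simp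
  | cons s l ih =>
      rw [wp_cons, mul_inv_rev, ih, M.sigmaE_inv, List.reverse_cons, wp_concat]

lemma exists_word {w : (S →₀ ℝ) ≃ₗ[ℝ] (S →₀ ℝ)} (hw : w ∈ M.Wgrp) :
    ∃ l : List S, M.wp l = w := by
  induction hw using Subgroup.closure_induction with
  | mem u hu =>
      obtain ⟨s, hs⟩ := hu
      refine ⟨[s], ?_⟩
      rw [wp_singleton]
      exact LinearEquiv.toLinearMap_injective (by rw [hs]; rfl)
  | one => exact ⟨[], rfl⟩
  | mul u v _ _ hu hv =>
      obtain ⟨l, hl⟩ := hu; obtain ⟨l', hl'⟩ := hv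
      exact ⟨l ++ l', by rw [wp_append, hl, hl']⟩
  | inv u _ hu =>
      obtain ⟨l, hl⟩ := hu
      exact ⟨l.reverse, by rw [← M.wp_inv, hl]⟩

/-- length: minimal length of a word representing `w` -/
noncomputable def len (w : (S →₀ ℝ) ≃ₗ[ℝ] (S →₀ ℝ)) : ℕ :=
  sInf {n | ∃ l : List S, l.length = n ∧ M.wp l = w}

lemma len_le {l : List S} {w : (S →₀ ℝ) ≃ₗ[ℝ] (S →₀ ℝ)} (h : M.wp l = w) :
    M.len w ≤ l.length := Nat.sInf_le ⟨l, rfl, h⟩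

lemma exists_min_word {w : (S →₀ ℝ) ≃ₗ[ℝ] (S →₀ ℝ)} (hw : w ∈ M.Wgrp) :
    ∃ l : List S, M.wp l = w ∧ l.length = M.len w := by
  obtain ⟨l, hl⟩ := M.exists_word hw
  have hne : {n | ∃ l : List S, l.length = n ∧ M.wp l = w}.Nonempty := ⟨l.length, l, rfl, hl⟩
  obtain ⟨l', hl', hw'⟩ := Nat.sInf_mem hne
  exact ⟨l', hw', hl'⟩

lemma len_one : M.len (1 : (S →₀ ℝ) ≃ₗ[ℝ] (S →₀ ℝ)) = 0 :=
  Nat.le_zero.mp (M.len_le (M.wp_nil))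

lemma eq_one_of_len_eq_zero {w : (S →₀ ℝ) ≃ₗ[ℝ] (S →₀ ℝ)} (hw : w ∈ M.Wgrp)
    (h : M.len w = 0) : w = 1 := by
  obtain ⟨l, hl, hlen⟩ := M.exists_min_word hw
  rw [h] at hlen
  rw [← hl, List.length_eq_zero_iff.mp hlen, wp_nil]

lemma len_mul_sigmaE_le (w : (S →₀ ℝ) ≃ₗ[ℝ] (S →₀ ℝ)) (hw : w ∈ M.Wgrp) (s : S) :
    M.len (w * M.sigmaE s) ≤ M.len w + 1 := by
  obtain ⟨l, hl, hlen⟩ := M.exists_min_word hw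
  have : M.wp (l ++ [s]) = w * M.sigmaE s := by rw [wp_concat, hl]
  calc M.len (w * M.sigmaE s) ≤ (l ++ [s]).length := M.len_le this
  _ = M.len w + 1 := by rw [List.length_append, hlen]; rfl

end CoxeterMat
/-- Chebyshev-like sequence -/
noncomputable def cheb (l : ℝ) : ℕ → ℝ
  | 0 => 0
  | 1 => 1
  | (n+2) => l * cheb l (n+1) - cheb l n

lemma cheb_zero (l : ℝ) : cheb l 0 = 0 := rfl
lemma cheb_one (l : ℝ) : cheb l 1 = 1 := rfl
lemma cheb_succ_succ (l : ℝ) (n : ℕ) : cheb l (n+2) = l * cheb l (n+1) - cheb l n := rfl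

lemma cheb_sin (θ : ℝ) : ∀ j : ℕ, Real.sin θ * cheb (2*Real.cos θ) j = Real.sin (j*θ)
  | 0 => by simp [cheb_zero]
  | 1 => by simp [cheb_one]
  | (j+2) => by
      have h1 := cheb_sin θ (j+1)
      have h0 := cheb_sin θ j
      have key : Real.sin (((j:ℝ)+2)*θ) =
          2*Real.cos θ * Real.sin (((j:ℝ)+1)*θ) - Real.sin ((j:ℝ)*θ) := by
        have e1 : ((j:ℝ)+2)*θ = (((j:ℝ)+1)*θ) + θ := by ring
        have e2 : (j:ℝ)*θ = (((j:ℝ)+1)*θ) - θ := by ring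
        rw [e1, e2, Real.sin_add, Real.sin_sub]
        ring
      push_cast
      push_cast at h1 h0
      rw [cheb_succ_succ]
      rw [key, ← h1, ← h0]
      ring

lemma cheb_two : ∀ j : ℕ, cheb 2 j = j
  | 0 => by simp [cheb_zero]
  | 1 => by simp [cheb_one]
  | (j+2) => by
      rw [cheb_succ_succ, cheb_two (j+1), cheb_two j]
      push_cast
      ring

/-- the alternating `Bool` word of length `k` ending with `false` -/
def altEnd : ℕ → List Bool
  | 0 => []
  | (k+1) => decide (k % 2 = 1) :: altEnd k

lemma altEnd_length : ∀ k, (altEnd k).length = k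
  | 0 => rfl
  | (k+1) => by simp [altEnd, altEnd_length k]

namespace CoxeterMat
variable {S : Type*} (M : CoxeterMat S)

/-- product of a dihedral word: `true ↦ a`, `false ↦ b` -/
noncomputable def pab (a b : S) (x : List Bool) : (S →₀ ℝ) ≃ₗ[ℝ] (S →₀ ℝ) :=
  M.wp (x.map fun c => cond c a b)

lemma pab_nil (a b : S) : M.pab a b [] = 1 := rfl

lemma pab_cons (a b : S) (c : Bool) (x : List Bool) :
    M.pab a b (c :: x) = M.sigmaE (cond c a b) * M.pab a b x := by
  unfold pab
  rw [List.map_cons, wp_cons]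

lemma pab_append (a b : S) (x y : List Bool) :
    M.pab a b (x ++ y) = M.pab a b x * M.pab a b y := by
  unfold pab
  rw [List.map_append, wp_append]

lemma pab_concat (a b : S) (x : List Bool) (c : Bool) :
    M.pab a b (x ++ [c]) = M.pab a b x * M.sigmaE (cond c a b) := by
  rw [pab_append]
  rw [show M.pab a b [c] = M.sigmaE (cond c a b) from by
        unfold pab; rw [List.map_singleton, wp_singleton]]

lemma pab_not (a b : S) (x : List Bool) : M.pab a b (x.map not) = M.pab b a x := by
  unfold pab
  rw [List.map_map]
  congr 1
  apply List.map_congr_left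
  intro c _
  cases c <;> rfl

lemma pab_mem (a b : S) (x : List Bool) : M.pab a b x ∈ M.Wgrp := M.wp_mem _

lemma pab_inv (a b : S) (x : List Bool) : (M.pab a b x)⁻¹ = M.pab a b x.reverse := by
  unfold pab
  rw [wp_inv, List.map_reverse]

lemma mulE_apply (e f : (S →₀ ℝ) ≃ₗ[ℝ] (S →₀ ℝ)) (v : S →₀ ℝ) : (e * f) v = e (f v) := rfl

lemma sigma_comb (s a b : S) (p r : ℝ) :
    M.sigma s (p • sroot a + r • sroot b) =
      p • (sroot a - (M.c s a) • (sroot s : S →₀ ℝ)) + r • (sroot b - (M.c s b) • sroot s) := by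
  rw [map_add, map_smul, map_smul, sigma_sroot, sigma_sroot]

/-- action of alternating words on `α_a` -/
lemma pab_altEnd_a (a b : S) (k : ℕ) : M.pab a b (altEnd k) (sroot a) =
    (if k % 2 = 0 then cheb (-(M.c a b)) (k+1) • sroot a + cheb (-(M.c a b)) k • sroot b
     else cheb (-(M.c a b)) k • sroot a + cheb (-(M.c a b)) (k+1) • sroot b) := by
  induction k with
  | zero =>
      rw [if_pos (by omega : 0 % 2 = 0)]
      rw [show altEnd 0 = [] from rfl, pab_nil]
      simp [cheb_zero, cheb_one]
  | succ k ih =>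
      rw [show altEnd (k+1) = decide (k % 2 = 1) :: altEnd k from rfl, pab_cons, mulE_apply, ih]
      rcases Nat.mod_two_eq_zero_or_one k with hk | hk
      · rw [if_pos hk, if_neg (by omega : ¬ (k+1) % 2 = 0)]
        rw [show (decide (k % 2 = 1)) = false by simp [hk]]
        show M.sigma b _ = _
        rw [sigma_comb, M.c_symm b a, M.c_self, cheb_succ_succ]
        module
      · rw [if_neg (by omega : ¬ k % 2 = 0), if_pos (by omega : (k+1) % 2 = 0)]
        rw [show (decide (k % 2 = 1)) = true by simp [hk]]
        show M.sigma a _ = _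
        rw [sigma_comb, M.c_self, cheb_succ_succ]
        module

/-- action of alternating words on `α_b` -/
lemma pab_altEnd_b (a b : S) (k : ℕ) : M.pab a b (altEnd k) (sroot b) =
    (if k % 2 = 0
     then (-(cheb (-(M.c a b)) k)) • sroot a
            + (-((-(M.c a b)) * cheb (-(M.c a b)) k - cheb (-(M.c a b)) (k+1))) • sroot b
     else (-((-(M.c a b)) * cheb (-(M.c a b)) k - cheb (-(M.c a b)) (k+1))) • sroot a
            + (-(cheb (-(M.c a b)) k)) • sroot b) := by
  induction k with
  | zero =>
      rw [if_pos (by omega : 0 % 2 = 0)]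
      rw [show altEnd 0 = [] from rfl, pab_nil]
      simp [cheb_zero, cheb_one]
  | succ k ih =>
      rw [show altEnd (k+1) = decide (k % 2 = 1) :: altEnd k from rfl, pab_cons, mulE_apply, ih]
      rcases Nat.mod_two_eq_zero_or_one k with hk | hk
      · rw [if_pos hk, if_neg (by omega : ¬ (k+1) % 2 = 0)]
        rw [show (decide (k % 2 = 1)) = false by simp [hk]]
        show M.sigma b _ = _
        rw [sigma_comb, M.c_symm b a, M.c_self, cheb_succ_succ]
        module
      · rw [if_neg (by omega : ¬ k % 2 = 0), if_pos (by omega : (k+1) % 2 = 0)]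
        rw [show (decide (k % 2 = 1)) = true by simp [hk]]
        show M.sigma a _ = _
        rw [sigma_comb, M.c_self, cheb_succ_succ]
        module

end CoxeterMat
namespace CoxeterMat
variable {S : Type*} (M : CoxeterMat S)

lemma lam_cos {a b : S} (h0 : M.m a b ≠ 0) :
    -(M.c a b) = 2 * Real.cos (Real.pi / (M.m a b : ℝ)) := by
  unfold c
  rw [if_neg h0]
  ring

lemma lam_two {a b : S} (h0 : M.m a b = 0) : -(M.c a b) = 2 := by
  unfold c
  rw [if_pos h0]
  norm_num

lemma cheb_vals {a b : S} (hab : a ≠ b) (h0 : M.m a b ≠ 0) :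
    cheb (-(M.c a b)) (M.m a b) = 0 ∧ (∀ j, j + 1 = M.m a b → cheb (-(M.c a b)) j = 1) ∧
    cheb (-(M.c a b)) (M.m a b + 1) = -1 ∧ (∀ j, j ≤ M.m a b → 0 ≤ cheb (-(M.c a b)) j) := by
  have hm2 : 2 ≤ M.m a b := M.two_le_m hab h0
  have hmr : (2:ℝ) ≤ (M.m a b : ℝ) := by exact_mod_cast hm2
  set θ := Real.pi / (M.m a b : ℝ) with hθ
  have hθpos : 0 < θ := by
    apply div_pos Real.pi_pos
    linarith
  have hθle : θ ≤ Real.pi / 2 :=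
    div_le_div_of_nonneg_left Real.pi_pos.le (by norm_num) hmr
  have hθlt : θ < Real.pi := lt_of_le_of_lt hθle (by linarith [Real.pi_pos])
  have hsin : 0 < Real.sin θ := Real.sin_pos_of_pos_of_lt_pi hθpos hθlt
  have key : ∀ j : ℕ, Real.sin θ * cheb (-(M.c a b)) j = Real.sin (j*θ) := by
    intro j
    rw [M.lam_cos h0]
    exact cheb_sin θ j
  have hmθ : (M.m a b : ℝ) * θ = Real.pi := by
    rw [hθ]
    field_simp
  refine ⟨?_, ?_, ?_, ?_⟩
  · have := key (M.m a b)
    rw [hmθ, Real.sin_pi] at this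
    exact (mul_eq_zero.mp this).resolve_left (ne_of_gt hsin)
  · intro j hj
    have hjθ : (j:ℝ) * θ = Real.pi - θ := by
      have : (j:ℝ) = (M.m a b : ℝ) - 1 := by
        have : ((j:ℝ) + 1) = (M.m a b : ℝ) := by exact_mod_cast congrArg (Nat.cast : ℕ → ℝ) hj
        linarith
      rw [this, sub_mul, one_mul, hmθ]
    have h := key j
    rw [hjθ, Real.sin_pi_sub] at h
    have h2 : Real.sin θ * cheb (-(M.c a b)) j = Real.sin θ * 1 := by rw [h, mul_one]
    exact mul_left_cancel₀ (ne_of_gt hsin) h2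
  · have h := key (M.m a b + 1)
    have hjθ : ((M.m a b + 1 : ℕ):ℝ) * θ = Real.pi + θ := by
      push_cast
      rw [add_mul, one_mul, hmθ]
    rw [hjθ] at h
    have hsin2 : Real.sin (Real.pi + θ) = -Real.sin θ := by
      rw [Real.sin_add]
      simp
    rw [hsin2] at h
    have h2 : Real.sin θ * cheb (-(M.c a b)) (M.m a b + 1) = Real.sin θ * (-1) := by
      rw [h]; ring
    exact mul_left_cancel₀ (ne_of_gt hsin) h2
  · intro j hj
    have h := key j
    have hjle : (j:ℝ) * θ ≤ Real.pi := by
      calc (j:ℝ) * θ ≤ (M.m a b : ℝ) * θ := by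
            apply mul_le_mul_of_nonneg_right _ hθpos.le
            exact_mod_cast hj
      _ = Real.pi := hmθ
    have hs : 0 ≤ Real.sin ((j:ℝ) * θ) := Real.sin_nonneg_of_nonneg_of_le_pi (by positivity) hjle
    nlinarith [h, hsin, hs]

end CoxeterMat
namespace CoxeterMat
variable {S : Type*} (M : CoxeterMat S)

lemma pab_span (a b : S) (x : List Bool) (v : S →₀ ℝ) :
    ∃ p r : ℝ, M.pab a b x v = v + p • sroot a + r • sroot b := by
  induction x with
  | nil => exact ⟨0, 0, by simp [pab_nil]⟩
  | cons c x ih =>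
      obtain ⟨p, r, hpr⟩ := ih
      rw [pab_cons, mulE_apply, hpr]
      cases c
      · refine ⟨p, r - (M.bform (sroot b) (v + p • sroot a + r • sroot b)), ?_⟩
        show M.sigma b _ = _
        rw [sigma_apply]
        module
      · refine ⟨p - (M.bform (sroot a) (v + p • sroot a + r • sroot b)), r, ?_⟩
        show M.sigma a _ = _
        rw [sigma_apply]
        module

lemma lam_lt_two {a b : S} (hab : a ≠ b) (h0 : M.m a b ≠ 0) : -(M.c a b) < 2 := by
  · rw [M.lam_cos h0]
    have hm2 : 2 ≤ M.m a b := M.two_le_m hab h0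
    have hmr : (2:ℝ) ≤ (M.m a b : ℝ) := by exact_mod_cast hm2
    have hθpos : 0 < Real.pi / (M.m a b : ℝ) := div_pos Real.pi_pos (by linarith)
    have hθlt : Real.pi / (M.m a b : ℝ) < Real.pi := by
      have := div_le_div_of_nonneg_left Real.pi_pos.le (by norm_num : (0:ℝ) < 2) hmr
      linarith [Real.pi_pos]
    have hsin : 0 < Real.sin (Real.pi / (M.m a b : ℝ)) :=
      Real.sin_pos_of_pos_of_lt_pi hθpos hθlt
    nlinarith [Real.sin_sq_add_cos_sq (Real.pi / (M.m a b : ℝ))]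

lemma braid {a b : S} (hab : a ≠ b) (h0 : M.m a b ≠ 0) :
    M.pab a b ((altEnd (M.m a b)).map not) = M.pab a b (altEnd (M.m a b)) := by
  obtain ⟨hQm, hQm1, hQmp1, _⟩ := M.cheb_vals hab h0
  have hcba : M.c b a = M.c a b := M.c_symm b a
  have ha : M.pab a b ((altEnd (M.m a b)).map not) (sroot a) =
      M.pab a b (altEnd (M.m a b)) (sroot a) := by
    rw [pab_not, M.pab_altEnd_b b a (M.m a b), M.pab_altEnd_a a b (M.m a b), hcba,
        hQm, hQmp1]
    split_ifs with h <;> module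
  have hb : M.pab a b ((altEnd (M.m a b)).map not) (sroot b) =
      M.pab a b (altEnd (M.m a b)) (sroot b) := by
    rw [pab_not, M.pab_altEnd_a b a (M.m a b), M.pab_altEnd_b a b (M.m a b), hcba,
        hQm, hQmp1]
    split_ifs with h <;> module
  have hzdef : M.pab a b ((altEnd (M.m a b)).reverse ++ (altEnd (M.m a b)).map not) =
      (M.pab a b (altEnd (M.m a b)))⁻¹ * M.pab a b ((altEnd (M.m a b)).map not) := by
    rw [pab_append, pab_inv]
  have honeapp : ∀ v : S →₀ ℝ, (1 : (S →₀ ℝ) ≃ₗ[ℝ] (S →₀ ℝ)) v = v := fun _ => rfl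
  have hza : M.pab a b ((altEnd (M.m a b)).reverse ++ (altEnd (M.m a b)).map not) (sroot a)
      = sroot a := by
    rw [hzdef, mulE_apply, ha, ← mulE_apply, inv_mul_cancel, honeapp]
  have hzb : M.pab a b ((altEnd (M.m a b)).reverse ++ (altEnd (M.m a b)).map not) (sroot b)
      = sroot b := by
    rw [hzdef, mulE_apply, hb, ← mulE_apply, inv_mul_cancel, honeapp]
  have hlam0 : 0 ≤ -(M.c a b) := by
    have := M.c_nonpos (show a ≠ b from hab)
    linarith
  have hlam2 : -(M.c a b) < 2 := M.lam_lt_two hab h0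
  have hz : ∀ v, M.pab a b ((altEnd (M.m a b)).reverse ++ (altEnd (M.m a b)).map not) v
      = v := by
    intro v
    obtain ⟨p, r, hpr⟩ := M.pab_span a b ((altEnd (M.m a b)).reverse ++ (altEnd (M.m a b)).map not) v
    have e1 := M.bform_w (M.pab_mem a b ((altEnd (M.m a b)).reverse ++ (altEnd (M.m a b)).map not)) v (sroot a)
    have e2 := M.bform_w (M.pab_mem a b ((altEnd (M.m a b)).reverse ++ (altEnd (M.m a b)).map not)) v (sroot b)
    rw [hpr, hza] at e1
    rw [hpr, hzb] at e2
    simp only [map_add, map_smul, LinearMap.add_apply, LinearMap.smul_apply, smul_eq_mul,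
      M.bform_single, M.c_self, hcba] at e1 e2
    have key : p * (4 - M.c a b * M.c a b) = 0 := by
      linear_combination 2*e1 - (M.c a b)*e2
    have hc2 : 4 - M.c a b * M.c a b ≠ 0 := by nlinarith
    have hp : p = 0 := by
      rcases mul_eq_zero.mp key with h | h
      · exact h
      · exact absurd h hc2
    have hr : r = 0 := by
      rw [hp] at e2
      linarith
    rw [hpr, hp, hr]
    module
  have hZ1 : M.pab a b ((altEnd (M.m a b)).reverse ++ (altEnd (M.m a b)).map not) = 1 :=
    LinearEquiv.ext fun v => by rw [hz v, honeapp]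
  rw [hzdef] at hZ1
  exact (inv_mul_eq_one.mp hZ1).symm
-- end
end CoxeterMat
lemma bool_parity (j : ℕ) : (!decide (j % 2 = 1)) = decide ((j+1) % 2 = 1) := by
  rcases Nat.mod_two_eq_zero_or_one j with h | h
  · have h2 : (j+1) % 2 = 1 := by omega
    simp [h, h2]
  · have h2 : (j+1) % 2 = 0 := by omega
    simp [h, h2]

lemma altEnd_succ (k : ℕ) : altEnd (k+1) = decide (k % 2 = 1) :: altEnd k := rfl

lemma altEnd_drop : ∀ (p k : ℕ), (altEnd (k + p)).drop p = altEnd k := by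
  intro p
  induction p with
  | zero => intro k; rfl
  | succ p ih =>
      intro k
      have : k + (p+1) = (k + p) + 1 := by omega
      rw [this, altEnd_succ, List.drop_succ_cons, ih]

lemma altEnd_take : ∀ (p k : ℕ), (altEnd (k + p + 1)).take (p+1) =
    (altEnd (k + p + 1)).take p ++ [decide (k % 2 = 1)] := by
  intro p
  induction p with
  | zero => intro k; rfl
  | succ p ih =>
      intro k
      have e : k + (p+1) + 1 = (k + p + 1) + 1 := by omega
      rw [e, altEnd_succ]
      rw [List.take_succ_cons, List.take_succ_cons, ih k]
      rfl

lemma chain_alt : ∀ (x : List Bool), x.Chain' (· ≠ ·) → x.getLast? = some false →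
    x = altEnd x.length
  | [], _, hl => by simp at hl
  | [c], _, hl => by
      simp at hl
      subst hl
      rfl
  | (c :: c' :: x), hc, hl => by
      simp only [List.Chain', List.isChain_cons_cons] at hc
      have hl2 : (c' :: x).getLast? = some false := by
        rwa [List.getLast?_cons_cons] at hl
      have ih := chain_alt (c' :: x) hc.2 hl2
      have hlen : (c' :: x).length = x.length + 1 := rfl
      have hc' : c' = decide (x.length % 2 = 1) := by
        have := congrArg List.head? ih
        rw [hlen, altEnd_succ] at this
        simpa using this
      have hcne : c ≠ c' := hc.1
      have : c = decide ((x.length + 1) % 2 = 1) := by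
        rw [← bool_parity, ← hc']
        rcases c <;> rcases c' <;> simp_all
      show c :: c' :: x = altEnd (x.length + 1 + 1)
      rw [altEnd_succ, ← this]
      rw [← hlen, ← ih]

namespace CoxeterMat
variable {S : Type*} (M : CoxeterMat S)

lemma dup_reduce (a b : S) (x1 x2 : List Bool) (c : Bool) :
    M.pab a b (x1 ++ c :: c :: x2) = M.pab a b (x1 ++ x2) := by
  rw [pab_append, pab_append, pab_cons, pab_cons,
    ← mul_assoc (M.sigmaE (cond c a b)) (M.sigmaE (cond c a b)) (M.pab a b x2),
    sigmaE_sq, one_mul]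

lemma reduce_not_chain (a b : S) (x : List Bool) : ¬ x.Chain' (· ≠ ·) →
    ∃ y : List Bool, y.length + 2 = x.length ∧ M.pab a b y = M.pab a b x := by
  induction x with
  | nil => intro h; exact absurd List.isChain_nil h
  | cons c x ih =>
      intro h
      match x, ih with
      | [], _ => exact absurd (List.isChain_singleton c) h
      | (c' :: x''), ih =>
          by_cases hcc : c = c'
          · subst hcc
            refine ⟨x'', by simp, ?_⟩
            have := M.dup_reduce a b [] x'' c
            simpa using this.symm
          · have h2 : ¬ (c' :: x'').Chain' (· ≠ ·) := by
              intro hch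
              exact h (List.isChain_cons_cons.mpr ⟨hcc, hch⟩)
            obtain ⟨y, hy1, hy2⟩ := ih h2
            refine ⟨c :: y, ?_, ?_⟩
            · simp only [List.length_cons] at hy1 ⊢
              omega
            · rw [pab_cons, pab_cons, hy2]

lemma len_mul_wp_le {w : (S →₀ ℝ) ≃ₗ[ℝ] (S →₀ ℝ)} (hw : w ∈ M.Wgrp) (l : List S) :
    M.len (w * M.wp l) ≤ M.len w + l.length := by
  obtain ⟨lw, hlw, hlen⟩ := M.exists_min_word hw
  have : M.wp (lw ++ l) = w * M.wp l := by rw [wp_append, hlw]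
  calc M.len (w * M.wp l) ≤ (lw ++ l).length := M.len_le this
  _ = M.len w + l.length := by rw [List.length_append, hlen]

lemma len_mul_pab_le {w : (S →₀ ℝ) ≃ₗ[ℝ] (S →₀ ℝ)} (hw : w ∈ M.Wgrp) (a b : S)
    (x : List Bool) : M.len (w * M.pab a b x) ≤ M.len w + x.length := by
  have := M.len_mul_wp_le hw (x.map fun c => cond c a b)
  rwa [List.length_map] at this

end CoxeterMat
namespace CoxeterMat
variable {S : Type*} (M : CoxeterMat S)

lemma sroot_nonneg (i u : S) : 0 ≤ (sroot i : S →₀ ℝ) u := by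
  classical
  unfold sroot
  rw [Finsupp.single_apply]
  split_ifs <;> norm_num

lemma sig_cancel (A : (S →₀ ℝ) ≃ₗ[ℝ] (S →₀ ℝ)) (s : S) :
    A * M.sigmaE s * M.sigmaE s = A := by
  rw [mul_assoc, sigmaE_sq, mul_one]

lemma mul_sig_sig (A B : (S →₀ ℝ) ≃ₗ[ℝ] (S →₀ ℝ)) (s : S) :
    A * (B * M.sigmaE s) * M.sigmaE s = A * B := by
  rw [mul_assoc, mul_assoc, sigmaE_sq, mul_one]

theorem wpos : ∀ (n : ℕ) (w : (S →₀ ℝ) ≃ₗ[ℝ] (S →₀ ℝ)), w ∈ M.Wgrp → ∀ (i : S),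
    M.len w ≤ n → M.len w ≤ M.len (w * M.sigmaE i) → ∀ u : S, 0 ≤ (w (sroot i)) u := by
  intro n
  induction n with
  | zero =>
      intro w hw i hn _ u
      have hw1 : w = 1 := M.eq_one_of_len_eq_zero hw (Nat.le_zero.mp hn)
      rw [hw1]
      exact sroot_nonneg i u
  | succ n ih =>
      intro w hw i hn hge u
      by_cases hl0 : M.len w = 0
      · have hw1 : w = 1 := M.eq_one_of_len_eq_zero hw hl0
        rw [hw1]
        exact sroot_nonneg i u
      obtain ⟨l, hl, hlen⟩ := M.exists_min_word hw
      rcases List.eq_nil_or_concat l with rfl | ⟨l', t0, rfl⟩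
      · exact absurd hlen.symm hl0
      rw [List.concat_eq_append] at hl hlen
      have hconc : M.wp l' * M.sigmaE t0 = w := by rw [← wp_concat]; exact hl
      have hlw' : M.wp l' = w * M.sigmaE t0 := by rw [← hconc, M.sig_cancel]
      have hl'len : l'.length + 1 = M.len w := by
        rw [← hlen, List.length_append, List.length_singleton]
      have hwt : M.len (w * M.sigmaE t0) + 1 ≤ M.len w := by
        have := M.len_le hlw'
        omega
      have hti : t0 ≠ i := by
        rintro rfl
        omega
      set TT : Set ℕ := {p | ∃ v : (S →₀ ℝ) ≃ₗ[ℝ] (S →₀ ℝ), v ∈ M.Wgrp ∧ M.len v = p ∧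
        ∃ x : List Bool, w = v * M.pab i t0 x ∧ M.len v + x.length ≤ M.len w} with hTT
      have hpabf : M.pab i t0 [false] = M.sigmaE t0 := by
        rw [pab_cons, pab_nil, mul_one]
        rfl
      have hmem0 : M.len (w * M.sigmaE t0) ∈ TT := by
        refine ⟨w * M.sigmaE t0, mul_mem hw (M.sigmaE_mem t0), rfl, [false], ?_, ?_⟩
        · rw [hpabf, M.sig_cancel]
        · rw [List.length_singleton]
          omega
      have hLle : sInf TT ≤ M.len (w * M.sigmaE t0) := Nat.sInf_le hmem0
      have hLlt : sInf TT + 1 ≤ M.len w := by omega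
      obtain ⟨v0, hv0, hv0len, x0, hx0, hx0sum⟩ := Nat.sInf_mem (⟨_, hmem0⟩ : TT.Nonempty)
      set TT2 : Set ℕ := {q | ∃ (v' : (S →₀ ℝ) ≃ₗ[ℝ] (S →₀ ℝ)) (x : List Bool),
        v' ∈ M.Wgrp ∧ M.len v' = sInf TT ∧ w = v' * M.pab i t0 x ∧
        sInf TT + x.length ≤ M.len w ∧ x.length = q} with hTT2
      have hT2ne : x0.length ∈ TT2 := by
        refine ⟨v0, x0, hv0, hv0len, hx0, ?_, rfl⟩
        rw [← hv0len]
        exact hx0sum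
      obtain ⟨v2, x, hv, hvlen, hweq, hsum, hxlen⟩ := Nat.sInf_mem (⟨_, hT2ne⟩ : TT2.Nonempty)
      have hdesc : ∀ c : Bool, M.len v2 ≤ M.len (v2 * M.sigmaE (cond c i t0)) := by
        intro c
        by_contra hcon
        push_neg at hcon
        have hmemc : M.len (v2 * M.sigmaE (cond c i t0)) ∈ TT := by
          refine ⟨v2 * M.sigmaE (cond c i t0), mul_mem hv (M.sigmaE_mem _), rfl, c :: x, ?_, ?_⟩
          · rw [pab_cons, ← mul_assoc, M.sig_cancel]
            exact hweq
          · rw [List.length_cons]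
            omega
        have := Nat.sInf_le hmemc
        omega
      have hposva : ∀ u, 0 ≤ (v2 (sroot i)) u := by
        refine ih v2 hv i (by omega) ?_
        exact hdesc true
      have hposvb : ∀ u, 0 ≤ (v2 (sroot t0)) u := by
        refine ih v2 hv t0 (by omega) ?_
        exact hdesc false
      have hchain : x.Chain' (· ≠ ·) := by
        by_contra hnc
        obtain ⟨y, hy1, hy2⟩ := M.reduce_not_chain i t0 x hnc
        have hmem : y.length ∈ TT2 := ⟨v2, y, hv, hvlen, by rw [hweq, hy2], by omega, rfl⟩
        have := Nat.sInf_le hmem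
        omega
      have hxne : x ≠ [] := by
        rintro rfl
        rw [pab_nil, mul_one] at hweq
        have : M.len w = sInf TT := by rw [hweq, hvlen]
        omega
      rcases List.eq_nil_or_concat x with rfl | ⟨x1, cl, rfl⟩
      · exact absurd rfl hxne
      rw [List.concat_eq_append] at hweq hsum hxlen hchain
      have hcl : cl = false := by
        by_contra hclf
        have hcl' : cl = true := by
          rcases cl
          · exact absurd rfl hclf
          · rfl
        subst hcl'
        have hwi : w * M.sigmaE i = v2 * M.pab i t0 x1 := by
          rw [hweq, pab_concat]
          exact M.mul_sig_sig v2 (M.pab i t0 x1) i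
        have hlen1 : M.len (w * M.sigmaE i) ≤ sInf TT + x1.length := by
          rw [hwi, ← hvlen]
          exact M.len_mul_pab_le hv i t0 x1
        have hx1len : (x1 ++ [true]).length = x1.length + 1 := by simp
        omega
      have hgl : (x1 ++ [cl]).getLast? = some false := by
        rw [hcl]
        exact List.getLast?_concat
      have hxalt : x1 ++ [cl] = altEnd (x1 ++ [cl]).length := chain_alt _ hchain hgl
      have hNlen : (x1 ++ [cl]).length = x1.length + 1 := by simp
      have hQpos : 0 ≤ cheb (-(M.c i t0)) ((x1 ++ [cl]).length) ∧
          0 ≤ cheb (-(M.c i t0)) ((x1 ++ [cl]).length + 1) := by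
        by_cases hm0 : M.m i t0 = 0
        · rw [M.lam_two hm0, cheb_two, cheb_two]
          constructor <;> positivity
        · have hit : i ≠ t0 := Ne.symm hti
          have hm2 : 2 ≤ M.m i t0 := M.two_le_m hit hm0
          have hvals := M.cheb_vals hit hm0
          have hNne : (x1 ++ [cl]).length ≠ M.m i t0 := by
            intro hNm
            have hbr := M.braid hit hm0
            have hmapx : (altEnd (M.m i t0)).map not = (x1.map not) ++ [true] := by
              rw [← hNm, ← hxalt, List.map_append, hcl]
              rfl
            have hweq2 : w = v2 * (M.pab i t0 (x1.map not) * M.sigmaE i) := by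
              rw [hweq, hxalt, hNm, ← hbr, hmapx, pab_concat]
              rfl
            have hwi : w * M.sigmaE i = v2 * M.pab i t0 (x1.map not) := by
              rw [hweq2]
              exact M.mul_sig_sig _ _ i
            have hlen1 : M.len (w * M.sigmaE i) ≤ sInf TT + x1.length := by
              rw [hwi, ← hvlen]
              have := M.len_mul_pab_le hv i t0 (x1.map not)
              rwa [List.length_map] at this
            have hx1len : (x1 ++ [cl]).length = x1.length + 1 := by simp
            omega
          have hNle : (x1 ++ [cl]).length ≤ M.m i t0 := by
            by_contra hgt
            push_neg at hgt
            obtain ⟨k1, hk1⟩ : ∃ k1, (x1 ++ [cl]).length = M.m i t0 + k1 + 1 :=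
              ⟨(x1 ++ [cl]).length - M.m i t0 - 1, by omega⟩
            have htake : (altEnd (M.m i t0 + k1 + 1)).take (k1+1) =
                (altEnd (M.m i t0 + k1 + 1)).take k1 ++ [decide (M.m i t0 % 2 = 1)] :=
              altEnd_take k1 (M.m i t0)
            have hdrop : (altEnd (M.m i t0 + k1 + 1)).drop (k1+1) = altEnd (M.m i t0) :=
              altEnd_drop (k1+1) (M.m i t0)
            have hsplit : altEnd (M.m i t0 + k1 + 1) =
                (altEnd (M.m i t0 + k1 + 1)).take (k1+1) ++ altEnd (M.m i t0) := by
              conv_lhs => rw [← List.take_append_drop (k1+1) (altEnd (M.m i t0 + k1 + 1))]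
              rw [hdrop]
            have hm2pos : M.m i t0 = (M.m i t0 - 1) + 1 := by omega
            have hmapalt : (altEnd (M.m i t0)).map not =
                decide (M.m i t0 % 2 = 1) :: (altEnd (M.m i t0 - 1)).map not := by
              conv_lhs => rw [hm2pos, altEnd_succ]
              rw [List.map_cons]
              congr 1
              rw [bool_parity (M.m i t0 - 1), ← hm2pos]
            have hbr := M.braid hit hm0
            have hpabeq : M.pab i t0 (altEnd (M.m i t0 + k1 + 1)) =
                M.pab i t0 ((altEnd (M.m i t0 + k1 + 1)).take k1 ++
                  (altEnd (M.m i t0 - 1)).map not) := by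
              calc M.pab i t0 (altEnd (M.m i t0 + k1 + 1))
                  = M.pab i t0 ((altEnd (M.m i t0 + k1 + 1)).take (k1+1) ++ altEnd (M.m i t0)) := by
                    rw [← hsplit]
                _ = M.pab i t0 ((altEnd (M.m i t0 + k1 + 1)).take (k1+1)) *
                      M.pab i t0 (altEnd (M.m i t0)) := by rw [pab_append]
                _ = M.pab i t0 ((altEnd (M.m i t0 + k1 + 1)).take (k1+1)) *
                      M.pab i t0 ((altEnd (M.m i t0)).map not) := by rw [hbr]
                _ = M.pab i t0 (((altEnd (M.m i t0 + k1 + 1)).take k1 ++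
                      [decide (M.m i t0 % 2 = 1)]) ++
                      (decide (M.m i t0 % 2 = 1) :: (altEnd (M.m i t0 - 1)).map not)) := by
                    rw [← pab_append, htake, hmapalt]
                _ = M.pab i t0 ((altEnd (M.m i t0 + k1 + 1)).take k1 ++
                      (decide (M.m i t0 % 2 = 1) :: decide (M.m i t0 % 2 = 1) ::
                        (altEnd (M.m i t0 - 1)).map not)) := by
                    rw [List.append_assoc]
                    rfl
                _ = M.pab i t0 ((altEnd (M.m i t0 + k1 + 1)).take k1 ++
                      (altEnd (M.m i t0 - 1)).map not) := M.dup_reduce i t0 _ _ _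
            have hylen : ((altEnd (M.m i t0 + k1 + 1)).take k1 ++
                (altEnd (M.m i t0 - 1)).map not).length = k1 + (M.m i t0 - 1) := by
              rw [List.length_append, List.length_take, List.length_map, altEnd_length,
                altEnd_length]
              omega
            have hmemy : ((altEnd (M.m i t0 + k1 + 1)).take k1 ++
                (altEnd (M.m i t0 - 1)).map not).length ∈ TT2 := by
              refine ⟨v2, _, hv, hvlen, ?_, ?_, rfl⟩
              · rw [hweq, hxalt, hk1, hpabeq]
              · rw [hylen]
                omega
            have := Nat.sInf_le hmemy
            omega
          exact ⟨hvals.2.2.2 _ (by omega), hvals.2.2.2 _ (by omega)⟩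
      rw [hweq, mulE_apply, hxalt, M.pab_altEnd_a i t0 ((x1 ++ [cl]).length)]
      split_ifs with hpar
      · rw [map_add, map_smul, map_smul, Finsupp.add_apply, Finsupp.smul_apply,
          Finsupp.smul_apply, smul_eq_mul, smul_eq_mul]
        exact add_nonneg (mul_nonneg hQpos.2 (hposva u)) (mul_nonneg hQpos.1 (hposvb u))
      · rw [map_add, map_smul, map_smul, Finsupp.add_apply, Finsupp.smul_apply,
          Finsupp.smul_apply, smul_eq_mul, smul_eq_mul]
        exact add_nonneg (mul_nonneg hQpos.1 (hposva u)) (mul_nonneg hQpos.2 (hposvb u))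

end CoxeterMat
namespace CoxeterMat
variable {S : Type*} (M : CoxeterMat S)

theorem root_sign {w : (S →₀ ℝ) ≃ₗ[ℝ] (S →₀ ℝ)} (hw : w ∈ M.Wgrp) (i : S) :
    (∀ u, 0 ≤ (w (sroot i)) u) ∨ (∀ u, (w (sroot i)) u ≤ 0) := by
  by_cases hc : M.len w ≤ M.len (w * M.sigmaE i)
  · exact Or.inl (M.wpos (M.len w) w hw i le_rfl hc)
  · right
    push_neg at hc
    have hw'mem : w * M.sigmaE i ∈ M.Wgrp := mul_mem hw (M.sigmaE_mem i)
    have hcan : (w * M.sigmaE i) * M.sigmaE i = w := M.sig_cancel w i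
    have hlt : M.len (w * M.sigmaE i) ≤ M.len ((w * M.sigmaE i) * M.sigmaE i) := by
      rw [hcan]
      omega
    have hpos := M.wpos (M.len (w * M.sigmaE i)) (w * M.sigmaE i) hw'mem i le_rfl hlt
    intro u
    have heq : w (sroot i) = -((w * M.sigmaE i) (sroot i)) := by
      rw [mulE_apply, sigmaE_apply, sigma_sroot_self, map_neg, neg_neg]
    rw [heq, Finsupp.neg_apply]
    linarith [hpos u]

lemma permV_sroot (g : Equiv.Perm S) (s : S) : permV g (sroot s) = sroot (g s) := by
  unfold permV sroot
  rw [Finsupp.domLCongr_single]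

lemma permV_apply (g : Equiv.Perm S) (f : S →₀ ℝ) (u : S) :
    (permV g f) u = f (g.symm u) := by
  unfold permV
  rw [Finsupp.domLCongr_apply]
  simp [Finsupp.domCongr_apply, Finsupp.equivMapDomain_apply]

lemma m_eq_two_of_c_eq_zero {s t : S} (hst : s ≠ t) (hc0 : M.c s t = 0) : M.m s t = 2 := by
  unfold c at hc0
  by_cases hm0 : M.m s t = 0
  · rw [if_pos hm0] at hc0
    norm_num at hc0
  · rw [if_neg hm0] at hc0
    have hm2 : 2 ≤ M.m s t := M.two_le_m hst hm0
    by_contra hm2ne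
    have hm3 : 3 ≤ M.m s t := by omega
    have hm3r : (3:ℝ) ≤ (M.m s t : ℝ) := by exact_mod_cast hm3
    have hθpos : 0 < Real.pi / (M.m s t : ℝ) := div_pos Real.pi_pos (by linarith)
    have hθlt : Real.pi / (M.m s t : ℝ) < Real.pi / 2 := by
      rw [div_lt_div_iff₀ (by linarith) (by norm_num)]
      nlinarith [Real.pi_pos]
    have hcpos : 0 < Real.cos (Real.pi / (M.m s t : ℝ)) := by
      apply Real.cos_pos_of_mem_Ioo
      constructor <;> [linarith; linarith]
    nlinarith

end CoxeterMat

set_option maxHeartbeats 1000000 in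
/-- Let `G` be a group of symmetries of `Γ` with all orbits of `S` finite. If every positive
root is of the form `w(α_s)` with `w ∈ W^G`, and `t = g(s) ≠ s` for some `g ∈ G`, then
`m_{s,t} = 2`. -/
theorem stmt12 {S : Type*} (M : CoxeterMat S) (G : Subgroup (Equiv.Perm S))
    (hG : ∀ g ∈ G, ∀ s t, M.m (g s) (g t) = M.m s t)
    (hfin : ∀ s : S, {t | ∃ g ∈ G, g s = t}.Finite)
    (hpos : ∀ a ∈ M.PhiPos, ∃ w ∈ M.WfixG G, ∃ s : S, a = w (sroot s))
    (s t : S) (g : Equiv.Perm S) (hg : g ∈ G) (hts : t = g s) (hne : t ≠ s) :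
    M.m s t = 2 := by
  classical
  have hst : s ≠ t := Ne.symm hne
  have hlam0 : 0 ≤ -(M.c s t) := by linarith [M.c_nonpos hst]
  have hβ : M.sigmaE s (sroot t) = sroot t + (-(M.c s t)) • sroot s := by
    rw [sigmaE_apply, sigma_sroot]
    module
  have hβPhi : sroot t + (-(M.c s t)) • sroot s ∈ M.Phi :=
    ⟨M.sigmaE s, M.sigmaE_mem s, t, hβ.symm⟩
  have hβpos : ∀ u, 0 ≤ (sroot t + (-(M.c s t)) • (sroot s : S →₀ ℝ)) u := by
    intro u
    rw [Finsupp.add_apply, Finsupp.smul_apply, smul_eq_mul]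
    exact add_nonneg (CoxeterMat.sroot_nonneg t u) (mul_nonneg hlam0 (CoxeterMat.sroot_nonneg s u))
  obtain ⟨w, hwfix, r, hβr⟩ := hpos _ ⟨hβPhi, hβpos⟩
  obtain ⟨hwW, hwcomm⟩ := hwfix
  have hwinv : w⁻¹ ∈ M.Wgrp := inv_mem hwW
  have hcomm : Commute (permV g) w := hwcomm g hg
  have hcommInv : permV g * w⁻¹ = w⁻¹ * permV g := hcomm.inv_right.eq
  have hγη : w⁻¹ (sroot t) = permV g (w⁻¹ (sroot s)) := by
    have h1 : (sroot t : S →₀ ℝ) = permV g (sroot s) := by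
      rw [CoxeterMat.permV_sroot, ← hts]
    rw [h1, ← mulE_apply, ← hcommInv, mulE_apply]
  have hsr : w⁻¹ (sroot t) + (-(M.c s t)) • (w⁻¹ (sroot s)) = sroot r := by
    have h2 : w⁻¹ (sroot t + (-(M.c s t)) • sroot s) = sroot r := by
      rw [hβr]
      exact w.symm_apply_apply (sroot r)
    rw [← h2, map_add, map_smul]
  have hsrr : (sroot r : S →₀ ℝ) r = 1 := by
    unfold CoxeterMat.sroot
    rw [Finsupp.single_eq_same]
  have hcoordr : (w⁻¹ (sroot t)) r + (-(M.c s t)) * ((w⁻¹ (sroot s)) r) = 1 := by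
    have := congrArg (fun f : S →₀ ℝ => f r) hsr
    simp only [Finsupp.add_apply, Finsupp.smul_apply, smul_eq_mul] at this
    rw [this, hsrr]
  rcases M.root_sign hwinv s with hppos | hpneg
  · -- η nonnegative
    have hγpos : ∀ u, 0 ≤ (w⁻¹ (sroot t)) u := by
      intro u
      rw [hγη, CoxeterMat.permV_apply]
      exact hppos _
    by_cases hc0 : M.c s t = 0
    · exact M.m_eq_two_of_c_eq_zero hst hc0
    · exfalso
      have hlampos : 0 < -(M.c s t) := lt_of_le_of_ne hlam0 (by simpa using hc0)
      have hoffη : ∀ u, u ≠ r → (w⁻¹ (sroot s)) u = 0 := by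
        intro u hu
        have hcoord := congrArg (fun f : S →₀ ℝ => f u) hsr
        simp only [Finsupp.add_apply, Finsupp.smul_apply, smul_eq_mul] at hcoord
        have hsru : (sroot r : S →₀ ℝ) u = 0 := by
          unfold CoxeterMat.sroot
          rw [Finsupp.single_apply, if_neg (fun h => hu h.symm)]
        rw [hsru] at hcoord
        have h1 : 0 ≤ (w⁻¹ (sroot t)) u := hγpos u
        have h2 : 0 ≤ (w⁻¹ (sroot s)) u := hppos u
        have h3 : (-(M.c s t)) * ((w⁻¹ (sroot s)) u) ≤ 0 := by linarith
        have h4 : 0 ≤ (-(M.c s t)) * ((w⁻¹ (sroot s)) u) := mul_nonneg hlam0 h2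
        have h5 : (-(M.c s t)) * ((w⁻¹ (sroot s)) u) = 0 := le_antisymm h3 h4
        exact (mul_eq_zero.mp h5).resolve_left (ne_of_gt hlampos)
      have hoffγ : ∀ u, u ≠ r → (w⁻¹ (sroot t)) u = 0 := by
        intro u hu
        have hcoord := congrArg (fun f : S →₀ ℝ => f u) hsr
        simp only [Finsupp.add_apply, Finsupp.smul_apply, smul_eq_mul] at hcoord
        have hsru : (sroot r : S →₀ ℝ) u = 0 := by
          unfold CoxeterMat.sroot
          rw [Finsupp.single_apply, if_neg (fun h => hu h.symm)]
        rw [hoffη u hu, hsru] at hcoord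
        linarith [hcoord]
      obtain ⟨e, he⟩ : ∃ e : ℝ, (w⁻¹ (sroot s)) r = e := ⟨_, rfl⟩
      obtain ⟨d, hd⟩ : ∃ d : ℝ, (w⁻¹ (sroot t)) r = d := ⟨_, rfl⟩
      have hηeq : w⁻¹ (sroot s) = e • (sroot r : S →₀ ℝ) := by
        ext u
        rw [Finsupp.smul_apply, smul_eq_mul]
        by_cases hu : u = r
        · subst hu
          rw [he, hsrr, mul_one]
        · rw [hoffη u hu]
          unfold CoxeterMat.sroot
          rw [Finsupp.single_apply, if_neg (fun h => hu h.symm), mul_zero]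
      have hγeq : w⁻¹ (sroot t) = d • (sroot r : S →₀ ℝ) := by
        ext u
        rw [Finsupp.smul_apply, smul_eq_mul]
        by_cases hu : u = r
        · subst hu
          rw [hd, hsrr, mul_one]
        · rw [hoffγ u hu]
          unfold CoxeterMat.sroot
          rw [Finsupp.single_apply, if_neg (fun h => hu h.symm), mul_zero]
      have hnormη : M.bform (w⁻¹ (sroot s)) (w⁻¹ (sroot s)) = 2 := by
        rw [M.bform_w hwinv, M.bform_single, M.c_self]
      have hnormγ : M.bform (w⁻¹ (sroot t)) (w⁻¹ (sroot t)) = 2 := by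
        rw [M.bform_w hwinv, M.bform_single, M.c_self]
      rw [hηeq] at hnormη
      rw [hγeq] at hnormγ
      simp only [map_smul, LinearMap.smul_apply, smul_eq_mul, M.bform_single, M.c_self]
        at hnormη hnormγ
      have hepos : 0 ≤ e := by rw [← he]; exact hppos r
      have hdpos : 0 ≤ d := by rw [← hd]; exact hγpos r
      have he1 : e = 1 := by nlinarith
      have hd1 : d = 1 := by nlinarith
      rw [he, hd, he1, hd1] at hcoordr
      nlinarith
  · -- η nonpositive: contradiction
    exfalso
    have hγneg : ∀ u, (w⁻¹ (sroot t)) u ≤ 0 := by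
      intro u
      rw [hγη, CoxeterMat.permV_apply]
      exact hpneg _
    have h1 := hγneg r
    have h2 := hpneg r
    nlinarith [hcoordr, mul_nonneg hlam0 (neg_nonneg.mpr h2)]
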